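/- Let k ≥ 3, let ℓ = ⌈k/2⌉ - 1, and let s = 2ℓ^k + 1. Then in every partition of the edge set of the complete split graph K*_{k,s} into ℓ parts, some part contains a subgraph isomorphic to K_{3,3}. Consequently the thickness of K*_{k,s} is at least ⌈k/2⌉. -/

import Mathlib

/-- The complete split graph `K*_{k,s}`: a `k`-clique plus `s` independent vertices
each adjacent to every vertex of the clique. -/
def completeSplitGraph (k s : ℕ) : SimpleGraph (Fin k ⊕ Fin s) :=
  SimpleGraph.fromRel (fun a _ => a.isLeft = true)

/-- For `k ≥ 3`, `ℓ = ⌈k/2⌉ - 1`, `s = 2ℓ^k+1`: every partition of the edges of the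
complete split graph `K*_{k,s}` into `ℓ` parts has a part containing a copy of `K_{3,3}`. -/
theorem completeSplitGraph_thickness (k : ℕ) (hk : 3 ≤ k)
    (c : Sym2 (Fin k ⊕ Fin (2 * ((k + 1) / 2 - 1) ^ k + 1)) → Fin ((k + 1) / 2 - 1)) :
    ∃ (i : Fin ((k + 1) / 2 - 1))
      (g : (Fin 3 ⊕ Fin 3) ↪ (Fin k ⊕ Fin (2 * ((k + 1) / 2 - 1) ^ k + 1))),
      ∀ u v, (completeBipartiteGraph (Fin 3) (Fin 3)).Adj u v →
        (completeSplitGraph k (2 * ((k + 1) / 2 - 1) ^ k + 1)).Adj (g u) (g v) ∧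
        c s(g u, g v) = i := by
  let ℓ := (k + 1) / 2 - 1
  let s := 2 * ℓ ^ k + 1
  -- pigeonhole on colour vectors
  let f : Fin s → (Fin k → Fin ℓ) := fun w u => c s(Sum.inl u, Sum.inr w)
  have h1 : Fintype.card (Fin k → Fin ℓ) * 2 < Fintype.card (Fin s) := by
    simp only [Fintype.card_fun, Fintype.card_fin]
    show ℓ ^ k * 2 < 2 * ℓ ^ k + 1
    omega
  obtain ⟨y, hy⟩ := Fintype.exists_lt_card_fiber_of_mul_lt_card f h1
  obtain ⟨T, hTsub, hT3⟩ := Finset.exists_subset_card_eq (n := 3) hy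
  obtain ⟨w0, w1, w2, hw01, hw02, hw12, rfl⟩ := Finset.card_eq_three.mp hT3
  have hfw : ∀ w ∈ ({w0, w1, w2} : Finset (Fin s)), f w = y := by
    intro w hw
    have := hTsub hw
    simpa using this
  -- pigeonhole on colours within the vector y
  have h2 : Fintype.card (Fin ℓ) * 2 < Fintype.card (Fin k) := by
    simp only [Fintype.card_fin]; omega
  obtain ⟨i, hi⟩ := Fintype.exists_lt_card_fiber_of_mul_lt_card y h2
  obtain ⟨T', hTsub', hT3'⟩ := Finset.exists_subset_card_eq (n := 3) hi
  obtain ⟨u0, u1, u2, hu01, hu02, hu12, rfl⟩ := Finset.card_eq_three.mp hT3'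
  have hyu : ∀ u ∈ ({u0, u1, u2} : Finset (Fin k)), y u = i := by
    intro u hu
    have := hTsub' hu
    simpa using this
  let U : Fin 3 → Fin k := ![u0, u1, u2]
  let W : Fin 3 → Fin s := ![w0, w1, w2]
  have hU : Function.Injective U := by
    intro a b h
    fin_cases a <;> fin_cases b <;> simp_all [U]
  have hW : Function.Injective W := by
    intro a b h
    fin_cases a <;> fin_cases b <;> simp_all [W]
  have key : ∀ (j m : Fin 3), c s(Sum.inl (U j), Sum.inr (W m)) = i := by
    intro j m
    have h1 : f (W m) = y := hfw _ (by fin_cases m <;> simp [W])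
    have h2 : y (U j) = i := hyu _ (by fin_cases j <;> simp [U])
    have : f (W m) (U j) = i := by rw [h1, h2]
    exact this
  refine ⟨i, ⟨Sum.elim (fun j => Sum.inl (U j)) (fun j => Sum.inr (W j)), ?_⟩, ?_⟩
  · rintro (a | a) (b | b) h <;> simp only [Sum.elim_inl, Sum.elim_inr] at h
    · exact congrArg Sum.inl (hU (Sum.inl.inj h))
    · exact absurd h (by simp)
    · exact absurd h (by simp)
    · exact congrArg Sum.inr (hW (Sum.inr.inj h))
  · rintro (j | j) (m | m) hadj
    · simp at hadj
    · exact ⟨by simp [completeSplitGraph, SimpleGraph.fromRel_adj]; exact Or.inl rfl, key j m⟩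
    · exact ⟨by simp [completeSplitGraph, SimpleGraph.fromRel_adj]; exact Or.inr rfl,
        by rw [Sym2.eq_swap]; exact key m j⟩
    · simp at hadj
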